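/- For every natural number n ≥ 1, the number g(n) of translation-equivalence classes of pairs (P, c), where P is a polyomino with n cells and c = (x, y) is a cell of P such that none of the cells (x−1, y−1), (x, y−1), (x+1, y−1), (x−1, y) belongs to P, satisfies g(n) ≤ G(n), where G is defined by the mutual recurrence F(0) = F(1) = G(0) = G(1) = 1 and, for n ≥ 2, F(n) = G(n) + ∑_{ℓ,m ≥ 1, ℓ+m = n} G(ℓ)G(m) and G(n) = F(n−1) + G(n−1) + ∑_{ℓ,m ≥ 1, ℓ+m = n−1} G(ℓ)G(m). -/

import Mathlib

/-- Two cells of ℤ² are adjacent if they differ by exactly 1 in exactly one coordinate. -/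
def Adj (a b : ℤ × ℤ) : Prop :=
  (a.1 = b.1 ∧ (a.2 - b.2).natAbs = 1) ∨ (a.2 = b.2 ∧ (a.1 - b.1).natAbs = 1)

/-- A polyomino is a finite nonempty edge-connected set of cells of ℤ². -/
def IsPolyomino (P : Finset (ℤ × ℤ)) : Prop :=
  P.Nonempty ∧ ∀ a ∈ P, ∀ b ∈ P,
    Relation.ReflTransGen (fun x y => x ∈ P ∧ y ∈ P ∧ Adj x y) a b

/-- Translate a set of cells by a vector. -/
def translateCells (v : ℤ × ℤ) (P : Finset (ℤ × ℤ)) : Finset (ℤ × ℤ) :=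
  P.image (· + v)

/-- The number of translation-equivalence classes of polyominoes with `n` cells. -/
noncomputable def polyA (n : ℕ) : ℕ :=
  Nat.card (Quot (fun (P Q : {P : Finset (ℤ × ℤ) // IsPolyomino P ∧ P.card = n}) =>
    ∃ v : ℤ × ℤ, translateCells v P.1 = Q.1))

/-- A marked cell `c = (x, y)` of `P` is of Type (A) if none of
`(x−1, y−1)`, `(x, y−1)`, `(x+1, y−1)` belongs to `P`. -/
def TypeA (P : Finset (ℤ × ℤ)) (c : ℤ × ℤ) : Prop :=
  (c.1 - 1, c.2 - 1) ∉ P ∧ (c.1, c.2 - 1) ∉ P ∧ (c.1 + 1, c.2 - 1) ∉ P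

/-- A marked cell `c = (x, y)` of `P` is of Type (B) if additionally
`(x−1, y)` does not belong to `P`. -/
def TypeB (P : Finset (ℤ × ℤ)) (c : ℤ × ℤ) : Prop :=
  TypeA P c ∧ (c.1 - 1, c.2) ∉ P

/-- The number of translation-equivalence classes of pairs `(P, c)` of a polyomino `P`
with `n` cells and a marked cell `c ∈ P` of Type (A). -/
noncomputable def polyf (n : ℕ) : ℕ :=
  Nat.card (Quot (fun (p q : {p : Finset (ℤ × ℤ) × (ℤ × ℤ) //
      IsPolyomino p.1 ∧ p.1.card = n ∧ p.2 ∈ p.1 ∧ TypeA p.1 p.2}) =>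
    ∃ v : ℤ × ℤ, translateCells v p.1.1 = q.1.1 ∧ p.1.2 + v = q.1.2))

/-- The number of translation-equivalence classes of pairs `(P, c)` of a polyomino `P`
with `n` cells and a marked cell `c ∈ P` of Type (B). -/
noncomputable def polyg (n : ℕ) : ℕ :=
  Nat.card (Quot (fun (p q : {p : Finset (ℤ × ℤ) × (ℤ × ℤ) //
      IsPolyomino p.1 ∧ p.1.card = n ∧ p.2 ∈ p.1 ∧ TypeB p.1 p.2}) =>
    ∃ v : ℤ × ℤ, translateCells v p.1.1 = q.1.1 ∧ p.1.2 + v = q.1.2))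

namespace PolyAux

abbrev Cell : Type := ℤ × ℤ

lemma adj_symm {a b : Cell} (h : Adj a b) : Adj b a := by
  rcases a with ⟨ax, ay⟩; rcases b with ⟨bx, by'⟩
  simp only [Adj] at h ⊢; omega

lemma adj_ne {a b : Cell} (h : Adj a b) : a ≠ b := by
  rcases a with ⟨ax, ay⟩; rcases b with ⟨bx, by'⟩
  simp only [Adj, ne_eq, Prod.mk.injEq] at h ⊢; omega

def rel (S : Finset Cell) (x y : Cell) : Prop := x ∈ S ∧ y ∈ S ∧ Adj x y

lemma rel_symm (S : Finset Cell) : Symmetric (rel S) :=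
  fun _ _ ⟨hx, hy, h⟩ => ⟨hy, hx, adj_symm h⟩

/-- connectivity within a finite set of cells -/
def conn (S : Finset Cell) (a b : Cell) : Prop := Relation.ReflTransGen (rel S) a b

lemma conn_symm {S : Finset Cell} {a b : Cell} (h : conn S a b) : conn S b a :=
  by haveI : Std.Symm (rel S) := ⟨fun _ _ h => rel_symm S h⟩; exact Relation.ReflTransGen.stdSymm.symm _ _ h

lemma conn_mono {S T : Finset Cell} (hST : S ⊆ T) {a b : Cell} (h : conn S a b) :
    conn T a b :=
  Relation.ReflTransGen.mono (fun _ _ ⟨h1, h2, h3⟩ => ⟨hST h1, hST h2, h3⟩) a b h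

lemma isPolyomino_iff {P : Finset Cell} :
    IsPolyomino P ↔ P.Nonempty ∧ ∀ a ∈ P, ∀ b ∈ P, conn P a b := Iff.rfl

open scoped Classical in
/-- the connected component of `a` inside `S` -/
noncomputable def cmpt (S : Finset Cell) (a : Cell) : Finset Cell :=
  S.filter (fun b => conn S a b)

lemma mem_cmpt {S : Finset Cell} {a b : Cell} : b ∈ cmpt S a ↔ b ∈ S ∧ conn S a b := by
  simp [cmpt]

lemma cmpt_subset (S : Finset Cell) (a : Cell) : cmpt S a ⊆ S := by
  intro b hb; exact (mem_cmpt.1 hb).1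

lemma mem_cmpt_self {S : Finset Cell} {a : Cell} (ha : a ∈ S) : a ∈ cmpt S a :=
  mem_cmpt.2 ⟨ha, Relation.ReflTransGen.refl⟩

lemma cmpt_closed {S : Finset Cell} {a b c : Cell} (hb : b ∈ cmpt S a) (hc : c ∈ S)
    (hadj : Adj b c) : c ∈ cmpt S a := by
  rcases mem_cmpt.1 hb with ⟨hbS, hconn⟩
  exact mem_cmpt.2 ⟨hc, hconn.tail ⟨hbS, hc, hadj⟩⟩

lemma conn_cmpt {S : Finset Cell} {a b : Cell} (ha : a ∈ S) (h : conn S a b) :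
    b ∈ cmpt S a ∧ conn (cmpt S a) a b := by
  induction h with
  | refl => exact ⟨mem_cmpt_self ha, Relation.ReflTransGen.refl⟩
  | tail _ hstep ih =>
      rcases hstep with ⟨hbS, hcS, hadj⟩
      refine ⟨cmpt_closed ih.1 hcS hadj, ih.2.tail ⟨ih.1, cmpt_closed ih.1 hcS hadj, hadj⟩⟩

lemma isPolyomino_cmpt {S : Finset Cell} {a : Cell} (ha : a ∈ S) :
    IsPolyomino (cmpt S a) := by
  refine ⟨⟨a, mem_cmpt_self ha⟩, ?_⟩
  intro x hx y hy
  have hx' := conn_cmpt ha (mem_cmpt.1 hx).2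
  have hy' := conn_cmpt ha (mem_cmpt.1 hy).2
  exact Relation.ReflTransGen.trans (conn_symm hx'.2) hy'.2

/-- A subset of a polyomino closed under adjacency within `P` and containing a point
is all of `P`. -/
lemma closed_subset_eq {P K : Finset Cell} (hP : IsPolyomino P) (hKP : K ⊆ P)
    (hcl : ∀ x ∈ K, ∀ y ∈ P, Adj x y → y ∈ K) {z : Cell} (hz : z ∈ K) :
    ∀ b ∈ P, b ∈ K := by
  intro b hb
  have hpath := hP.2 z (hKP hz) b hb
  induction hpath with
  | refl => exact hz
  | tail _ hstep ih => exact hcl _ (ih hstep.1) _ hstep.2.1 hstep.2.2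

/-- removing a cell whose only neighbour in `P` is `u` keeps things connected to `u`. -/
lemma erase_conn {P : Finset Cell} (hP : IsPolyomino P) {c u : Cell}
    (hc : c ∈ P) (hu : u ∈ P) (hcu : u ≠ c) (hadj : Adj c u)
    (huniq : ∀ y ∈ P, Adj c y → y = u) :
    ∀ b ∈ P.erase c, b ∈ cmpt (P.erase c) u := by
  intro b hb
  have huP : u ∈ P.erase c := Finset.mem_erase.2 ⟨hcu, hu⟩
  set K : Finset Cell := insert c (cmpt (P.erase c) u) with hK
  have hKP : K ⊆ P := by
    intro x hx
    rcases Finset.mem_insert.1 hx with rfl | hx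
    · exact hc
    · exact Finset.mem_of_mem_erase (cmpt_subset _ _ hx)
  have hcl : ∀ x ∈ K, ∀ y ∈ P, Adj x y → y ∈ K := by
    intro x hx y hy hxy
    rcases Finset.mem_insert.1 hx with rfl | hx
    · have := huniq y hy hxy
      subst this
      exact Finset.mem_insert.2 (Or.inr (mem_cmpt_self huP))
    · by_cases hyc : y = c
      · subst hyc; exact Finset.mem_insert_self _ _
      · exact Finset.mem_insert.2
          (Or.inr (cmpt_closed hx (Finset.mem_erase.2 ⟨hyc, hy⟩) hxy))
  have hall := closed_subset_eq hP hKP hcl (Finset.mem_insert_self _ _) b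
    (Finset.mem_of_mem_erase hb)
  rcases Finset.mem_insert.1 hall with rfl | h
  · exact absurd rfl (Finset.mem_erase.1 hb).1
  · exact h

/-- the erased set is a polyomino when `c`'s only neighbour is `u`. -/
lemma isPolyomino_erase {P : Finset Cell} (hP : IsPolyomino P) {c u : Cell}
    (hc : c ∈ P) (hu : u ∈ P) (hcu : u ≠ c) (hadj : Adj c u)
    (huniq : ∀ y ∈ P, Adj c y → y = u) :
    IsPolyomino (P.erase c) := by
  have huP : u ∈ P.erase c := Finset.mem_erase.2 ⟨hcu, hu⟩
  refine ⟨⟨u, huP⟩, ?_⟩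
  intro x hx y hy
  have hx' := erase_conn hP hc hu hcu hadj huniq x hx
  have hy' := erase_conn hP hc hu hcu hadj huniq y hy
  have hx'' := conn_cmpt huP (mem_cmpt.1 hx').2
  have hy'' := conn_cmpt huP (mem_cmpt.1 hy').2
  have h1 : conn (P.erase c) u x := conn_mono (cmpt_subset _ _) hx''.2
  have h2 : conn (P.erase c) u y := conn_mono (cmpt_subset _ _) hy''.2
  exact Relation.ReflTransGen.trans (conn_symm h1) h2

section Split

variable (P : Finset Cell) (c u r : Cell)

/-- the `r`-side component (after removing `c` and `u`) -/
noncomputable def CrS : Finset Cell := cmpt ((P.erase c).erase u) r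

/-- the `u`-side rest -/
noncomputable def CuS : Finset Cell := (P.erase c) \ CrS P c u r

variable {P c u r}

/-- Case-3 context: `c ∈ P`, both `u, r ∈ P` adjacent to `c`, and these are the only
neighbours of `c` in `P`. -/
structure SplitCtx (P : Finset Cell) (c u r : Cell) : Prop where
  poly : IsPolyomino P
  hc : c ∈ P
  hu : u ∈ P
  hr : r ∈ P
  hur : u ≠ r
  huc : u ≠ c
  hrc : r ≠ c
  huniq : ∀ y ∈ P, Adj c y → y = u ∨ y = r

namespace SplitCtx

lemma r_mem_base (H : SplitCtx P c u r) : r ∈ (P.erase c).erase u :=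
  Finset.mem_erase.2 ⟨(H.hur.symm : r ≠ u), Finset.mem_erase.2 ⟨H.hrc, H.hr⟩⟩

lemma r_mem_Cr (H : SplitCtx P c u r) : r ∈ CrS P c u r := mem_cmpt_self H.r_mem_base

lemma Cr_subset : CrS P c u r ⊆ P.erase c :=
  (cmpt_subset _ _).trans (Finset.erase_subset _ _)

lemma u_not_mem_Cr : u ∉ CrS P c u r := by
  intro h
  exact (Finset.mem_erase.1 (cmpt_subset _ _ h)).1 rfl

lemma u_mem_Cu (H : SplitCtx P c u r) : u ∈ CuS P c u r :=
  Finset.mem_sdiff.2 ⟨Finset.mem_erase.2 ⟨H.huc, H.hu⟩, u_not_mem_Cr⟩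

lemma Cu_subset : CuS P c u r ⊆ P.erase c := Finset.sdiff_subset

lemma c_not_mem_Cu : c ∉ CuS P c u r := fun h => (Finset.mem_erase.1 (Cu_subset h)).1 rfl

lemma c_not_mem_Cr : c ∉ CrS P c u r := fun h => (Finset.mem_erase.1 (Cr_subset h)).1 rfl

lemma r_not_mem_Cu (H : SplitCtx P c u r) : r ∉ CuS P c u r := fun h => (Finset.mem_sdiff.1 h).2 H.r_mem_Cr

/-- anything in `P` other than `c, u` adjacent to the `r`-component is in it -/
lemma mem_Cr_of_adj {x y : Cell} (hx : x ∈ CrS P c u r) (hy : y ∈ P) (hyc : y ≠ c)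
    (hyu : y ≠ u) (hxy : Adj x y) : y ∈ CrS P c u r :=
  cmpt_closed hx (Finset.mem_erase.2 ⟨hyu, Finset.mem_erase.2 ⟨hyc, hy⟩⟩) hxy

lemma conn_Cu (H : SplitCtx P c u r) : ∀ z ∈ CuS P c u r, z ∈ cmpt (CuS P c u r) u := by
  intro z hz
  set K : Finset Cell := cmpt (CuS P c u r) z with hK
  by_cases hmem : u ∈ K
  · have h1 := (mem_cmpt.1 hmem).2
    exact mem_cmpt.2 ⟨hz, conn_symm h1⟩
  · exfalso
    have hKP : K ⊆ P := fun x hx =>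
      Finset.mem_of_mem_erase (Cu_subset (cmpt_subset _ _ hx))
    have hcl : ∀ x ∈ K, ∀ y ∈ P, Adj x y → y ∈ K := by
      intro x hx y hy hxy
      have hxCu : x ∈ CuS P c u r := cmpt_subset _ _ hx
      have hxu : x ≠ u := fun h => hmem (h ▸ hx)
      by_cases hyc : y = c
      · subst hyc
        rcases H.huniq x (hKP hx) (adj_symm hxy) with h | h
        · exact absurd h hxu
        · exact absurd (h ▸ hxCu) H.r_not_mem_Cu
      · by_cases hyCr : y ∈ CrS P c u r
        · have hxP : x ∈ P := hKP hx
          have hxc : x ≠ c := fun h => c_not_mem_Cu (h ▸ hxCu)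
          have : x ∈ CrS P c u r := mem_Cr_of_adj hyCr hxP hxc hxu (adj_symm hxy)
          exact absurd this (Finset.mem_sdiff.1 hxCu).2
        · have hyCu : y ∈ CuS P c u r :=
            Finset.mem_sdiff.2 ⟨Finset.mem_erase.2 ⟨hyc, hy⟩, hyCr⟩
          exact cmpt_closed hx hyCu hxy
    have hall := closed_subset_eq H.poly hKP hcl (mem_cmpt_self hz) c H.hc
    exact c_not_mem_Cu (cmpt_subset _ _ hall)

lemma isPolyomino_Cu (H : SplitCtx P c u r) : IsPolyomino (CuS P c u r) := by
  refine ⟨⟨u, H.u_mem_Cu⟩, ?_⟩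
  intro x hx y hy
  have hx' := conn_cmpt H.u_mem_Cu (mem_cmpt.1 (H.conn_Cu x hx)).2
  have hy' := conn_cmpt H.u_mem_Cu (mem_cmpt.1 (H.conn_Cu y hy)).2
  have h1 : conn (CuS P c u r) u x := conn_mono (cmpt_subset _ _) hx'.2
  have h2 : conn (CuS P c u r) u y := conn_mono (cmpt_subset _ _) hy'.2
  exact Relation.ReflTransGen.trans (conn_symm h1) h2

lemma isPolyomino_Cr (H : SplitCtx P c u r) : IsPolyomino (CrS P c u r) := isPolyomino_cmpt H.r_mem_base

lemma union_eq : CuS P c u r ∪ CrS P c u r = P.erase c := by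
  apply Finset.Subset.antisymm
  · exact Finset.union_subset Cu_subset Cr_subset
  · intro x hx
    by_cases h : x ∈ CrS P c u r
    · exact Finset.mem_union_right _ h
    · exact Finset.mem_union_left _ (Finset.mem_sdiff.2 ⟨hx, h⟩)

lemma disj : Disjoint (CuS P c u r) (CrS P c u r) := Finset.sdiff_disjoint

lemma card_eq (H : SplitCtx P c u r) {n : ℕ} (hP : P.card = n) :
    (CuS P c u r).card + (CrS P c u r).card = n - 1 := by
  have h1 : (CuS P c u r ∪ CrS P c u r).card = (CuS P c u r).card + (CrS P c u r).card :=
    Finset.card_union_of_disjoint disj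
  rw [union_eq] at h1
  rw [← h1, Finset.card_erase_of_mem H.hc, hP]

end SplitCtx

end Split

section Maps

/-- translation by `v` as an equivalence -/
def eT (v : Cell) : Cell ≃ Cell where
  toFun p := p + v
  invFun p := p - v
  left_inv p := by simp
  right_inv p := by simp

/-- `(x,y) ↦ (x, y-1)`: translation taking `u = (0,1)` to the origin -/
def φ1 : Cell ≃ Cell where
  toFun p := (p.1, p.2 - 1)
  invFun p := (p.1, p.2 + 1)
  left_inv p := by simp
  right_inv p := by simp

/-- `(x,y) ↦ (y, x-1)`: diagonal reflection through `r = (1,0)`, then moving `r` to the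
origin -/
def φ2 : Cell ≃ Cell where
  toFun p := (p.2, p.1 - 1)
  invFun p := (p.2 + 1, p.1)
  left_inv p := by simp
  right_inv p := by simp

/-- `(x,y) ↦ (-x, y-1)`: reflection about the column of `u = (0,1)`, then moving `u`
to the origin -/
def φ3 : Cell ≃ Cell where
  toFun p := (-p.1, p.2 - 1)
  invFun p := (-p.1, p.2 + 1)
  left_inv p := by simp
  right_inv p := by simp

/-- `(x,y) ↦ (y, -x-1)`: rotation by -90° about `e = (-1,0)`, then moving `e` to the
origin -/
def φ4 : Cell ≃ Cell where
  toFun p := (p.2, -p.1 - 1)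
  invFun p := (-p.2 - 1, p.1)
  left_inv p := by simp
  right_inv p := by simp

lemma adj_eT (v : Cell) {a b : Cell} (h : Adj a b) : Adj (eT v a) (eT v b) := by
  rcases a with ⟨ax, ay⟩; rcases b with ⟨bx, by'⟩; rcases v with ⟨vx, vy⟩
  simp only [Adj, eT, Equiv.coe_fn_mk, Prod.mk_add_mk, Prod.fst, Prod.snd] at h ⊢
  omega

lemma adj_φ1 {a b : Cell} (h : Adj a b) : Adj (φ1 a) (φ1 b) := by
  rcases a with ⟨ax, ay⟩; rcases b with ⟨bx, by'⟩
  simp only [Adj, φ1, Equiv.coe_fn_mk] at h ⊢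
  omega

lemma adj_φ2 {a b : Cell} (h : Adj a b) : Adj (φ2 a) (φ2 b) := by
  rcases a with ⟨ax, ay⟩; rcases b with ⟨bx, by'⟩
  simp only [Adj, φ2, Equiv.coe_fn_mk] at h ⊢
  omega

lemma adj_φ3 {a b : Cell} (h : Adj a b) : Adj (φ3 a) (φ3 b) := by
  rcases a with ⟨ax, ay⟩; rcases b with ⟨bx, by'⟩
  simp only [Adj, φ3, Equiv.coe_fn_mk] at h ⊢
  omega

lemma adj_φ4 {a b : Cell} (h : Adj a b) : Adj (φ4 a) (φ4 b) := by
  rcases a with ⟨ax, ay⟩; rcases b with ⟨bx, by'⟩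
  simp only [Adj, φ4, Equiv.coe_fn_mk] at h ⊢
  omega

lemma conn_map {S : Finset Cell} (e : Cell ≃ Cell)
    (he : ∀ a b : Cell, Adj a b → Adj (e a) (e b)) {a b : Cell} (h : conn S a b) :
    conn (S.map e.toEmbedding) (e a) (e b) := by
  induction h with
  | refl => exact Relation.ReflTransGen.refl
  | tail _ hstep ih =>
      exact ih.tail ⟨Finset.mem_map_of_mem _ hstep.1, Finset.mem_map_of_mem _ hstep.2.1,
        he _ _ hstep.2.2⟩

lemma isPolyomino_map {P : Finset Cell} (hP : IsPolyomino P) (e : Cell ≃ Cell)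
    (he : ∀ a b : Cell, Adj a b → Adj (e a) (e b)) :
    IsPolyomino (P.map e.toEmbedding) := by
  obtain ⟨⟨w, hw⟩, hconn⟩ := hP
  refine ⟨⟨e w, Finset.mem_map_of_mem _ hw⟩, ?_⟩
  intro x hx y hy
  rcases Finset.mem_map.1 hx with ⟨x', hx', rfl⟩
  rcases Finset.mem_map.1 hy with ⟨y', hy', rfl⟩
  exact conn_map e he (hconn x' hx' y' hy')

end Maps

section Canon

/-- canonical type-B marked polyominoes: mark at the origin -/
def GoodB (n : ℕ) (P : Finset Cell) : Prop :=
  IsPolyomino P ∧ P.card = n ∧ ((0, 0) : Cell) ∈ P ∧ TypeB P (0, 0)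

/-- canonical type-A marked polyominoes: mark at the origin -/
def GoodA (n : ℕ) (P : Finset Cell) : Prop :=
  IsPolyomino P ∧ P.card = n ∧ ((0, 0) : Cell) ∈ P ∧ TypeA P (0, 0)

abbrev CG (n : ℕ) : Type := {P : Finset Cell // GoodB n P}
abbrev CF (n : ℕ) : Type := {P : Finset Cell // GoodA n P}

lemma typeA_zero_iff {P : Finset Cell} :
    TypeA P (0, 0) ↔ ((-1, -1) : Cell) ∉ P ∧ ((0, -1) : Cell) ∉ P ∧ ((1, -1) : Cell) ∉ P := by
  simp [TypeA]

lemma typeB_zero_iff {P : Finset Cell} :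
    TypeB P (0, 0) ↔ (((-1, -1) : Cell) ∉ P ∧ ((0, -1) : Cell) ∉ P ∧ ((1, -1) : Cell) ∉ P) ∧
      ((-1, 0) : Cell) ∉ P := by
  simp [TypeB, TypeA]

end Canon

section Finite

/-- discrete intermediate value property along a connected set, x-coordinates -/
lemma exists_fst_eq {P : Finset Cell} {b : Cell}
    (h0 : ((0,0) : Cell) ∈ P) (h : conn P (0,0) b) :
    ∀ t : ℤ, min 0 b.1 ≤ t → t ≤ max 0 b.1 → ∃ p ∈ P, p.1 = t := by
  induction h with
  | refl =>
      intro t h1 h2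
      simp only [min_self, max_self] at h1 h2
      exact ⟨(0,0), h0, by omega⟩
  | @tail m b hpath hstep ih =>
      intro t h1 h2
      have hadj : m.1 = b.1 ∨ (m.1 - b.1).natAbs = 1 := by
        rcases hstep.2.2 with ⟨h', _⟩ | ⟨_, h'⟩
        · exact Or.inl h'
        · exact Or.inr h'
      by_cases hm : min 0 m.1 ≤ t ∧ t ≤ max 0 m.1
      · exact ih t hm.1 hm.2
      · refine ⟨b, hstep.2.1, ?_⟩
        omega

lemma exists_snd_eq {P : Finset Cell} {b : Cell}
    (h0 : ((0,0) : Cell) ∈ P) (h : conn P (0,0) b) :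
    ∀ t : ℤ, min 0 b.2 ≤ t → t ≤ max 0 b.2 → ∃ p ∈ P, p.2 = t := by
  induction h with
  | refl =>
      intro t h1 h2
      simp only [min_self, max_self] at h1 h2
      exact ⟨(0,0), h0, by omega⟩
  | @tail m b hpath hstep ih =>
      intro t h1 h2
      have hadj : m.2 = b.2 ∨ (m.2 - b.2).natAbs = 1 := by
        rcases hstep.2.2 with ⟨_, h'⟩ | ⟨h', _⟩
        · exact Or.inr h'
        · exact Or.inl h'
      by_cases hm : min 0 m.2 ≤ t ∧ t ≤ max 0 m.2
      · exact ih t hm.1 hm.2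
      · refine ⟨b, hstep.2.1, ?_⟩
        omega

lemma card_Icc_le {P : Finset Cell} (lo hi : ℤ)
    (h : ∀ t : ℤ, lo ≤ t → t ≤ hi → ∃ p ∈ P, p.1 = t) :
    (Finset.Icc lo hi).card ≤ P.card := by
  have hsub : Finset.Icc lo hi ⊆ P.image Prod.fst := by
    intro t ht
    rcases Finset.mem_Icc.1 ht with ⟨h1, h2⟩
    rcases h t h1 h2 with ⟨p, hp, hpt⟩
    exact Finset.mem_image.2 ⟨p, hp, hpt⟩
  exact (Finset.card_le_card hsub).trans (Finset.card_image_le)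

lemma card_Icc_le' {P : Finset Cell} (lo hi : ℤ)
    (h : ∀ t : ℤ, lo ≤ t → t ≤ hi → ∃ p ∈ P, p.2 = t) :
    (Finset.Icc lo hi).card ≤ P.card := by
  have hsub : Finset.Icc lo hi ⊆ P.image Prod.snd := by
    intro t ht
    rcases Finset.mem_Icc.1 ht with ⟨h1, h2⟩
    rcases h t h1 h2 with ⟨p, hp, hpt⟩
    exact Finset.mem_image.2 ⟨p, hp, hpt⟩
  exact (Finset.card_le_card hsub).trans (Finset.card_image_le)

lemma coord_bound {P : Finset Cell} (hP : IsPolyomino P)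
    (h0 : ((0,0) : Cell) ∈ P) {a : Cell} (ha : a ∈ P) :
    a.1.natAbs < P.card ∧ a.2.natAbs < P.card := by
  have hconn := hP.2 (0,0) h0 a ha
  constructor
  · have h1 := card_Icc_le (min 0 a.1) (max 0 a.1) (exists_fst_eq h0 hconn)
    rw [Int.card_Icc] at h1
    omega
  · have h2 := card_Icc_le' (min 0 a.2) (max 0 a.2) (exists_snd_eq h0 hconn)
    rw [Int.card_Icc] at h2
    omega

/-- the bounding box -/
noncomputable def box (n : ℕ) : Finset Cell := Finset.Icc ((-(n:ℤ), -(n:ℤ))) (((n:ℤ), (n:ℤ)))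

lemma subset_box {P : Finset Cell} {n : ℕ} (hP : IsPolyomino P) (hcard : P.card = n)
    (h0 : ((0,0) : Cell) ∈ P) : P ⊆ box n := by
  intro a ha
  have h := coord_bound hP h0 ha
  rw [hcard] at h
  simp only [box, Finset.mem_Icc, Prod.le_def]
  constructor
  · constructor <;> omega
  · constructor <;> omega

noncomputable instance CG.finite (n : ℕ) : Finite (CG n) := by
  have : ∀ x : CG n, x.1 ∈ (box n).powerset := by
    intro ⟨P, hP⟩
    exact Finset.mem_powerset.2 (subset_box hP.1 hP.2.1 hP.2.2.1)
  apply Finite.of_injective (fun x : CG n => (⟨x.1, this x⟩ : {S // S ∈ (box n).powerset}))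
  intro x y h
  exact Subtype.ext (by simpa [Subtype.ext_iff] using h)

noncomputable instance CF.finite (n : ℕ) : Finite (CF n) := by
  have : ∀ x : CF n, x.1 ∈ (box n).powerset := by
    intro ⟨P, hP⟩
    exact Finset.mem_powerset.2 (subset_box hP.1 hP.2.1 hP.2.2.1)
  apply Finite.of_injective (fun x : CF n => (⟨x.1, this x⟩ : {S // S ∈ (box n).powerset}))
  intro x y h
  exact Subtype.ext (by simpa [Subtype.ext_iff] using h)

end Finite

section Translate

lemma mem_translate {P : Finset Cell} {v a : Cell} :
    a ∈ translateCells v P ↔ a - v ∈ P := by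
  constructor
  · rintro h
    rcases Finset.mem_image.1 h with ⟨b, hb, rfl⟩
    simpa using hb
  · intro h
    exact Finset.mem_image.2 ⟨a - v, h, by simp⟩

lemma translate_eq_map (v : Cell) (P : Finset Cell) :
    translateCells v P = P.map (eT v).toEmbedding := by
  ext a
  rw [mem_translate, Finset.mem_map_equiv]
  rfl

lemma translate_translate (v w : Cell) (P : Finset Cell) :
    translateCells w (translateCells v P) = translateCells (v + w) P := by
  ext a
  simp only [mem_translate]
  have e : a - w - v = a - (v + w) := by abel
  rw [e]

lemma translate_zero (P : Finset Cell) : translateCells 0 P = P := by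
  ext a
  simp [mem_translate]

lemma isPolyomino_translate {P : Finset Cell} (hP : IsPolyomino P) (v : Cell) :
    IsPolyomino (translateCells v P) := by
  rw [translate_eq_map]
  exact isPolyomino_map hP _ (fun _ _ h => adj_eT v h)

lemma card_translate (P : Finset Cell) (v : Cell) :
    (translateCells v P).card = P.card := by
  rw [translate_eq_map, Finset.card_map]

lemma typeB_translate {P : Finset Cell} {c : Cell} (h : TypeB P c) (v : Cell) :
    TypeB (translateCells v P) (c + v) := by
  rcases h with ⟨⟨h1, h2, h3⟩, h4⟩
  rcases c with ⟨cx, cy⟩; rcases v with ⟨vx, vy⟩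
  simp only [TypeB, TypeA, mem_translate, Prod.mk_add_mk, Prod.mk_sub_mk] at h1 h2 h3 h4 ⊢
  refine ⟨⟨?_, ?_, ?_⟩, ?_⟩
  · have e : (cx + vx - 1 - vx, cy + vy - 1 - vy) = ((cx - 1 : ℤ), (cy - 1 : ℤ)) := by
      simp only [Prod.mk.injEq]; omega
    rw [e]; exact h1
  · have e : (cx + vx - vx, cy + vy - 1 - vy) = ((cx : ℤ), (cy - 1 : ℤ)) := by
      simp only [Prod.mk.injEq]; omega
    rw [e]; exact h2
  · have e : (cx + vx + 1 - vx, cy + vy - 1 - vy) = ((cx + 1 : ℤ), (cy - 1 : ℤ)) := by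
      simp only [Prod.mk.injEq]; omega
    rw [e]; exact h3
  · have e : (cx + vx - 1 - vx, cy + vy - vy) = ((cx - 1 : ℤ), (cy : ℤ)) := by
      simp only [Prod.mk.injEq]; omega
    rw [e]; exact h4

end Translate

section QuotLink

/-- the underlying marked-polyomino subtype used in `polyg` -/
abbrev MarkedB (n : ℕ) : Type :=
  {p : Finset (ℤ × ℤ) × (ℤ × ℤ) //
      IsPolyomino p.1 ∧ p.1.card = n ∧ p.2 ∈ p.1 ∧ TypeB p.1 p.2}

noncomputable def toCanonB (n : ℕ) (p : MarkedB n) : CG n := by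
  refine ⟨translateCells (-p.1.2) p.1.1, ?_, ?_, ?_, ?_⟩
  · exact isPolyomino_translate p.2.1 _
  · rw [card_translate]; exact p.2.2.1
  · rw [mem_translate]
    have e : ((0,0) : Cell) - (-p.1.2) = p.1.2 := by simp
    rw [e]; exact p.2.2.2.1
  · have h := typeB_translate p.2.2.2.2 (-p.1.2)
    have e : p.1.2 + -p.1.2 = ((0,0) : Cell) := by simp [Prod.ext_iff]
    rwa [e] at h

lemma toCanonB_respects (n : ℕ) (p q : MarkedB n)
    (h : ∃ v : ℤ × ℤ, translateCells v p.1.1 = q.1.1 ∧ p.1.2 + v = q.1.2) :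
    toCanonB n p = toCanonB n q := by
  rcases h with ⟨v, hPQ, hcv⟩
  apply Subtype.ext
  show translateCells (-p.1.2) p.1.1 = translateCells (-q.1.2) q.1.1
  rw [← hPQ, translate_translate, ← hcv]
  congr 1
  abel

lemma polyg_le_cardCG (n : ℕ) : polyg n ≤ Nat.card (CG n) := by
  have hresp := toCanonB_respects n
  set f : Quot (fun (p q : MarkedB n) =>
      ∃ v : ℤ × ℤ, translateCells v p.1.1 = q.1.1 ∧ p.1.2 + v = q.1.2) → CG n :=
    Quot.lift (toCanonB n) hresp with hf
  have hinj : Function.Injective f := by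
    intro a b
    induction a using Quot.ind with | _ p =>
    induction b using Quot.ind with | _ q =>
    intro h
    have h' : toCanonB n p = toCanonB n q := h
    apply Quot.sound
    refine ⟨q.1.2 - p.1.2, ?_, by abel⟩
    have h'' : translateCells (-p.1.2) p.1.1 = translateCells (-q.1.2) q.1.1 :=
      congrArg Subtype.val h'
    have h3 := congrArg (translateCells q.1.2) h''
    rw [translate_translate, translate_translate] at h3
    have e1 : -q.1.2 + q.1.2 = ((0,0) : Cell) := by simp [Prod.ext_iff]
    have e2 : -p.1.2 + q.1.2 = q.1.2 - p.1.2 := by abel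
    rw [e1, e2] at h3
    have e3 : translateCells ((0,0) : Cell) q.1.1 = q.1.1 := translate_zero q.1.1
    rw [e3] at h3
    exact h3
  exact Nat.card_le_card_of_injective f hinj

end QuotLink

section Decomp

lemma map_cancel (e : Cell ≃ Cell) (S : Finset Cell) :
    (S.map e.toEmbedding).map e.symm.toEmbedding = S := by
  ext a
  rw [Finset.mem_map_equiv, Finset.mem_map_equiv]
  simp

/-- the only possible neighbours of the origin in a type-B marked polyomino -/
lemma nbrs {P : Finset Cell} (hB : TypeB P (0,0)) :
    ∀ y ∈ P, Adj (0,0) y → y = ((0,1) : Cell) ∨ y = ((1,0) : Cell) := by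
  rw [typeB_zero_iff] at hB
  rcases hB with ⟨⟨h1, h2, h3⟩, h4⟩
  rintro ⟨yx, yy⟩ hy hadj
  have hcase : (yx = 0 ∧ (yy = 1 ∨ yy = -1)) ∨ (yy = 0 ∧ (yx = 1 ∨ yx = -1)) := by
    simp only [Adj] at hadj
    omega
  rcases hcase with ⟨rfl, h | h⟩ | ⟨rfl, h | h⟩
  · subst h; exact Or.inl rfl
  · subst h; exact absurd hy h2
  · subst h; exact Or.inr rfl
  · subst h; exact absurd hy h4

lemma exists_nbr {P : Finset Cell} (hP : IsPolyomino P) (h0 : ((0,0) : Cell) ∈ P)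
    (h2 : 2 ≤ P.card) : ∃ m ∈ P, Adj (0,0) m := by
  have : 1 < P.card := h2
  rw [Finset.one_lt_card] at this
  rcases this with ⟨a, ha, b, hb, hab⟩
  have hne : ∃ w ∈ P, w ≠ ((0,0) : Cell) := by
    by_cases h : a = ((0,0) : Cell)
    · exact ⟨b, hb, by rw [← h]; exact fun hh => hab hh.symm⟩
    · exact ⟨a, ha, h⟩
  rcases hne with ⟨w, hw, hwne⟩
  have hpath := hP.2 (0,0) h0 w hw
  rcases (Relation.ReflTransGen.cases_head hpath) with heq | ⟨m, hm, _⟩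
  · exact absurd heq.symm hwne
  · exact ⟨m, hm.2.1, hm.2.2⟩

lemma adj_0u : Adj ((0,0) : Cell) ((0,1) : Cell) := by
  simp [Adj]

lemma adj_0r : Adj ((0,0) : Cell) ((1,0) : Cell) := by
  simp [Adj]

/-- Case 1 of the G-step: `r ∉ P`.  The piece `(P \ c) + (0,-1)`, marked `u ↦ 0`. -/
noncomputable def g1 {n : ℕ} (x : CG n) (hn : 2 ≤ n) (hr : ((1,0) : Cell) ∉ x.1) :
    CF (n-1) := by
  obtain ⟨P, hP, hcard, h0, hB⟩ := x
  have hB4 := typeB_zero_iff.1 hB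
  have hu : ((0,1) : Cell) ∈ P := by
    rcases exists_nbr hP h0 (by omega) with ⟨m, hm, hadj⟩
    rcases nbrs hB m hm hadj with rfl | rfl
    · exact hm
    · exact absurd hm hr
  have huniq : ∀ y ∈ P, Adj (0,0) y → y = ((0,1) : Cell) := by
    intro y hy hadj
    rcases nbrs hB y hy hadj with h | h
    · exact h
    · exact absurd (h ▸ hy) hr
  have hpoly : IsPolyomino (P.erase (0,0)) :=
    isPolyomino_erase hP h0 hu (by simp [Prod.ext_iff]) adj_0u huniq
  refine ⟨(P.erase (0,0)).map φ1.toEmbedding, ?_, ?_, ?_, ?_⟩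
  · exact isPolyomino_map hpoly _ (fun _ _ h => adj_φ1 h)
  · rw [Finset.card_map, Finset.card_erase_of_mem h0, hcard]
  · have hmem : ((0,1) : Cell) ∈ P.erase (0,0) :=
      Finset.mem_erase.2 ⟨by simp [Prod.ext_iff], hu⟩
    have h' := Finset.mem_map_of_mem (φ1.toEmbedding) hmem
    simpa [φ1] using h'
  · rw [typeA_zero_iff]
    refine ⟨?_, ?_, ?_⟩
    · rw [Finset.mem_map_equiv]
      have e : φ1.symm ((-1,-1) : Cell) = ((-1,0) : Cell) := by simp [φ1]
      rw [e]
      intro hmem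
      exact hB4.2 (Finset.mem_of_mem_erase hmem)
    · rw [Finset.mem_map_equiv]
      have e : φ1.symm ((0,-1) : Cell) = ((0,0) : Cell) := by simp [φ1]
      rw [e]
      intro hmem
      exact (Finset.mem_erase.1 hmem).1 rfl
    · rw [Finset.mem_map_equiv]
      have e : φ1.symm ((1,-1) : Cell) = ((1,0) : Cell) := by simp [φ1]
      rw [e]
      intro hmem
      exact hr (Finset.mem_of_mem_erase hmem)

lemma g1_spec {n : ℕ} (x : CG n) (hn : 2 ≤ n) (hr : ((1,0) : Cell) ∉ x.1) :
    x.1 = insert ((0,0) : Cell) (((g1 x hn hr).1).map φ1.symm.toEmbedding) := by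
  obtain ⟨P, hP, hcard, h0, hB⟩ := x
  show P = insert ((0,0) : Cell) (((P.erase (0,0)).map φ1.toEmbedding).map φ1.symm.toEmbedding)
  rw [map_cancel, Finset.insert_erase h0]

/-- Case 2 of the G-step: `r ∈ P`, `u ∉ P`.  The piece `τ'(P \ c)`, marked `r ↦ 0`. -/
noncomputable def g2 {n : ℕ} (x : CG n) (hn : 2 ≤ n) (hr : ((1,0) : Cell) ∈ x.1)
    (hu : ((0,1) : Cell) ∉ x.1) : CG (n-1) := by
  obtain ⟨P, hP, hcard, h0, hB⟩ := x
  have hB4 := typeB_zero_iff.1 hB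
  have huniq : ∀ y ∈ P, Adj (0,0) y → y = ((1,0) : Cell) := by
    intro y hy hadj
    rcases nbrs hB y hy hadj with h | h
    · exact absurd (h ▸ hy) hu
    · exact h
  have hpoly : IsPolyomino (P.erase (0,0)) :=
    isPolyomino_erase hP h0 hr (by simp [Prod.ext_iff]) adj_0r huniq
  refine ⟨(P.erase (0,0)).map φ2.toEmbedding, ?_, ?_, ?_, ?_⟩
  · exact isPolyomino_map hpoly _ (fun _ _ h => adj_φ2 h)
  · rw [Finset.card_map, Finset.card_erase_of_mem h0, hcard]
  · have hmem : ((1,0) : Cell) ∈ P.erase (0,0) :=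
      Finset.mem_erase.2 ⟨by simp [Prod.ext_iff], hr⟩
    have h' := Finset.mem_map_of_mem (φ2.toEmbedding) hmem
    simpa [φ2] using h'
  · rw [typeB_zero_iff]
    refine ⟨⟨?_, ?_, ?_⟩, ?_⟩
    · rw [Finset.mem_map_equiv]
      have e : φ2.symm ((-1,-1) : Cell) = ((0,-1) : Cell) := by simp [φ2]
      rw [e]
      intro hmem
      exact hB4.1.2.1 (Finset.mem_of_mem_erase hmem)
    · rw [Finset.mem_map_equiv]
      have e : φ2.symm ((0,-1) : Cell) = ((0,0) : Cell) := by simp [φ2]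
      rw [e]
      intro hmem
      exact (Finset.mem_erase.1 hmem).1 rfl
    · rw [Finset.mem_map_equiv]
      have e : φ2.symm ((1,-1) : Cell) = ((0,1) : Cell) := by simp [φ2]
      rw [e]
      intro hmem
      exact hu (Finset.mem_of_mem_erase hmem)
    · rw [Finset.mem_map_equiv]
      have e : φ2.symm ((-1,0) : Cell) = ((1,-1) : Cell) := by simp [φ2]
      rw [e]
      intro hmem
      exact hB4.1.2.2 (Finset.mem_of_mem_erase hmem)

lemma g2_spec {n : ℕ} (x : CG n) (hn : 2 ≤ n) (hr : ((1,0) : Cell) ∈ x.1)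
    (hu : ((0,1) : Cell) ∉ x.1) :
    x.1 = insert ((0,0) : Cell) (((g2 x hn hr hu).1).map φ2.symm.toEmbedding) := by
  obtain ⟨P, hP, hcard, h0, hB⟩ := x
  show P = insert ((0,0) : Cell) (((P.erase (0,0)).map φ2.toEmbedding).map φ2.symm.toEmbedding)
  rw [map_cancel, Finset.insert_erase h0]

open SplitCtx in
/-- the split context in case 3 -/
lemma mkSplitCtx {n : ℕ} (x : CG n) (hr : ((1,0) : Cell) ∈ x.1)
    (hu : ((0,1) : Cell) ∈ x.1) : SplitCtx x.1 (0,0) (0,1) (1,0) where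
  poly := x.2.1
  hc := x.2.2.2.1
  hu := hu
  hr := hr
  hur := by simp [Prod.ext_iff]
  huc := by simp [Prod.ext_iff]
  hrc := by simp [Prod.ext_iff]
  huniq := nbrs x.2.2.2.2

open SplitCtx in
/-- Case 3 of the G-step: `r, u ∈ P`: split into two pieces. -/
noncomputable def g3 {n : ℕ} (x : CG n) (hn : 2 ≤ n) (hr : ((1,0) : Cell) ∈ x.1)
    (hu : ((0,1) : Cell) ∈ x.1) :
    Σ l : {l : ℕ // l ∈ Finset.Ioo 0 (n-1)}, CG l.1 × CG (n-1-l.1) := by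
  have H := mkSplitCtx x hr hu
  set P := x.1 with hPdef
  have hB4 := typeB_zero_iff.1 x.2.2.2.2
  set Cu := CuS P (0,0) (0,1) (1,0) with hCu
  set Cr := CrS P (0,0) (0,1) (1,0) with hCr
  have hcards : Cu.card + Cr.card = n - 1 := H.card_eq x.2.2.1
  have hCuPos : 0 < Cu.card := Finset.card_pos.2 ⟨_, H.u_mem_Cu⟩
  have hCrPos : 0 < Cr.card := Finset.card_pos.2 ⟨_, H.r_mem_Cr⟩
  have hl : Cu.card ∈ Finset.Ioo 0 (n-1) := by
    rw [Finset.mem_Ioo]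
    omega
  refine ⟨⟨Cu.card, hl⟩, ⟨⟨Cu.map φ3.toEmbedding, ?_, ?_, ?_, ?_⟩,
    ⟨Cr.map φ2.toEmbedding, ?_, ?_, ?_, ?_⟩⟩⟩
  · exact isPolyomino_map (H.isPolyomino_Cu) _ (fun _ _ h => adj_φ3 h)
  · rw [Finset.card_map]
  · have h' := Finset.mem_map_of_mem (φ3.toEmbedding) H.u_mem_Cu
    simpa [φ3] using h'
  · rw [typeB_zero_iff]
    refine ⟨⟨?_, ?_, ?_⟩, ?_⟩
    · rw [Finset.mem_map_equiv]
      have e : φ3.symm ((-1,-1) : Cell) = ((1,0) : Cell) := by simp [φ3]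
      rw [e]
      exact H.r_not_mem_Cu
    · rw [Finset.mem_map_equiv]
      have e : φ3.symm ((0,-1) : Cell) = ((0,0) : Cell) := by simp [φ3]
      rw [e]
      exact c_not_mem_Cu
    · rw [Finset.mem_map_equiv]
      have e : φ3.symm ((1,-1) : Cell) = ((-1,0) : Cell) := by simp [φ3]
      rw [e]
      intro hmem
      exact hB4.2 (Finset.mem_of_mem_erase (Cu_subset hmem))
    · rw [Finset.mem_map_equiv]
      have e : φ3.symm ((-1,0) : Cell) = ((1,1) : Cell) := by simp [φ3]
      rw [e]
      intro hmem
      have h11P : ((1,1) : Cell) ∈ P := Finset.mem_of_mem_erase (Cu_subset hmem)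
      have h11Cr : ((1,1) : Cell) ∈ Cr := by
        refine mem_Cr_of_adj H.r_mem_Cr h11P (by simp [Prod.ext_iff]) (by simp [Prod.ext_iff]) ?_
        simp [Adj]
      exact (Finset.mem_sdiff.1 hmem).2 h11Cr
  · exact isPolyomino_map (H.isPolyomino_Cr) _ (fun _ _ h => adj_φ2 h)
  · rw [Finset.card_map]
    show Cr.card = n - 1 - Cu.card
    omega
  · have h' := Finset.mem_map_of_mem (φ2.toEmbedding) H.r_mem_Cr
    simpa [φ2] using h'
  · rw [typeB_zero_iff]
    refine ⟨⟨?_, ?_, ?_⟩, ?_⟩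
    · rw [Finset.mem_map_equiv]
      have e : φ2.symm ((-1,-1) : Cell) = ((0,-1) : Cell) := by simp [φ2]
      rw [e]
      intro hmem
      exact hB4.1.2.1 (Finset.mem_of_mem_erase (Cr_subset hmem))
    · rw [Finset.mem_map_equiv]
      have e : φ2.symm ((0,-1) : Cell) = ((0,0) : Cell) := by simp [φ2]
      rw [e]
      exact c_not_mem_Cr
    · rw [Finset.mem_map_equiv]
      have e : φ2.symm ((1,-1) : Cell) = ((0,1) : Cell) := by simp [φ2]
      rw [e]
      exact u_not_mem_Cr
    · rw [Finset.mem_map_equiv]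
      have e : φ2.symm ((-1,0) : Cell) = ((1,-1) : Cell) := by simp [φ2]
      rw [e]
      intro hmem
      exact hB4.1.2.2 (Finset.mem_of_mem_erase (Cr_subset hmem))

lemma g3_val1 {n : ℕ} (x : CG n) (hn : 2 ≤ n) (hr : ((1,0) : Cell) ∈ x.1)
    (hu : ((0,1) : Cell) ∈ x.1) :
    ((g3 x hn hr hu).2.1).1 = (CuS x.1 (0,0) (0,1) (1,0)).map φ3.toEmbedding := rfl

lemma g3_val2 {n : ℕ} (x : CG n) (hn : 2 ≤ n) (hr : ((1,0) : Cell) ∈ x.1)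
    (hu : ((0,1) : Cell) ∈ x.1) :
    ((g3 x hn hr hu).2.2).1 = (CrS x.1 (0,0) (0,1) (1,0)).map φ2.toEmbedding := rfl

lemma g3_spec {n : ℕ} (x : CG n) (hn : 2 ≤ n) (hr : ((1,0) : Cell) ∈ x.1)
    (hu : ((0,1) : Cell) ∈ x.1) :
    x.1 = insert ((0,0) : Cell)
      ((((g3 x hn hr hu).2.1.1).map φ3.symm.toEmbedding) ∪
       (((g3 x hn hr hu).2.2.1).map φ2.symm.toEmbedding)) := by
  have H := mkSplitCtx x hr hu
  rw [g3_val1, g3_val2, map_cancel, map_cancel, SplitCtx.union_eq,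
    Finset.insert_erase x.2.2.2.1]

/-- the codomain of the G-step decomposition -/
abbrev bucketG (n : ℕ) : Type :=
  CF (n-1) ⊕ CG (n-1) ⊕ Σ l : {l : ℕ // l ∈ Finset.Ioo 0 (n-1)}, CG l.1 × CG (n-1-l.1)

noncomputable def decompG {n : ℕ} (hn : 2 ≤ n) (x : CG n) : bucketG n :=
  if hr : ((1,0) : Cell) ∈ x.1 then
    if hu : ((0,1) : Cell) ∈ x.1 then Sum.inr (Sum.inr (g3 x hn hr hu))
    else Sum.inr (Sum.inl (g2 x hn hr hu))
  else Sum.inl (g1 x hn hr)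

lemma decompG_inj {n : ℕ} (hn : 2 ≤ n) : Function.Injective (decompG hn) := by
  intro x y h
  unfold decompG at h
  by_cases hrx : ((1,0) : Cell) ∈ x.1 <;> by_cases hry : ((1,0) : Cell) ∈ y.1
  · rw [dif_pos hrx, dif_pos hry] at h
    by_cases hux : ((0,1) : Cell) ∈ x.1 <;> by_cases huy : ((0,1) : Cell) ∈ y.1
    · rw [dif_pos hux, dif_pos huy] at h
      injection h with h
      injection h with h
      have h1 : ((g3 x hn hrx hux).2.1).1 = ((g3 y hn hry huy).2.1).1 :=
        congrArg (fun s => s.2.1.1) h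
      have h2 : ((g3 x hn hrx hux).2.2).1 = ((g3 y hn hry huy).2.2).1 :=
        congrArg (fun s => s.2.2.1) h
      apply Subtype.ext
      rw [g3_spec x hn hrx hux, g3_spec y hn hry huy, h1, h2]
    · rw [dif_pos hux, dif_neg huy] at h
      injection h with h
      cases h
    · rw [dif_neg hux, dif_pos huy] at h
      injection h with h
      cases h
    · rw [dif_neg hux, dif_neg huy] at h
      injection h with h
      injection h with h
      have h1 : ((g2 x hn hrx hux).1 : Finset Cell) = (g2 y hn hry huy).1 :=
        congrArg Subtype.val h
      apply Subtype.ext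
      rw [g2_spec x hn hrx hux, g2_spec y hn hry huy, h1]
  · rw [dif_pos hrx, dif_neg hry] at h
    by_cases hux : ((0,1) : Cell) ∈ x.1
    · rw [dif_pos hux] at h
      cases h
    · rw [dif_neg hux] at h
      cases h
  · rw [dif_neg hrx, dif_pos hry] at h
    by_cases huy : ((0,1) : Cell) ∈ y.1
    · rw [dif_pos huy] at h
      cases h
    · rw [dif_neg huy] at h
      cases h
  · rw [dif_neg hrx, dif_neg hry] at h
    injection h with h
    have h1 : ((g1 x hn hrx).1 : Finset Cell) = (g1 y hn hry).1 :=
      congrArg Subtype.val h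
    apply Subtype.ext
    rw [g1_spec x hn hrx, g1_spec y hn hry, h1]

end Decomp

section FStep

/-- In the F-step with `e = (-1,0) ∈ P`:  `X` is the component of the origin
in `P.erase e`. -/
noncomputable def XS (P : Finset Cell) : Finset Cell := cmpt (P.erase ((-1,0) : Cell)) (0,0)

/-- `Y` is the rest. -/
noncomputable def YS (P : Finset Cell) : Finset Cell := P \ XS P

variable {P : Finset Cell}

lemma c_mem_X (h0 : ((0,0) : Cell) ∈ P) : ((0,0) : Cell) ∈ XS P :=
  mem_cmpt_self (Finset.mem_erase.2 ⟨by simp [Prod.ext_iff], h0⟩)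

lemma X_subset : XS P ⊆ P := (cmpt_subset _ _).trans (Finset.erase_subset _ _)

lemma e_not_mem_X : ((-1,0) : Cell) ∉ XS P := fun h =>
  (Finset.mem_erase.1 (cmpt_subset _ _ h)).1 rfl

lemma e_mem_Y (he : ((-1,0) : Cell) ∈ P) : ((-1,0) : Cell) ∈ YS P :=
  Finset.mem_sdiff.2 ⟨he, e_not_mem_X⟩

lemma Y_subset : YS P ⊆ P := Finset.sdiff_subset

lemma c_not_mem_Y (h0 : ((0,0) : Cell) ∈ P) : ((0,0) : Cell) ∉ YS P := fun h =>
  (Finset.mem_sdiff.1 h).2 (c_mem_X h0)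

lemma mem_X_of_adj {x y : Cell} (hx : x ∈ XS P) (hy : y ∈ P) (hye : y ≠ ((-1,0) : Cell))
    (hxy : Adj x y) : y ∈ XS P :=
  cmpt_closed hx (Finset.mem_erase.2 ⟨hye, hy⟩) hxy

lemma u_mem_X (h0 : ((0,0) : Cell) ∈ P) (hu : ((0,1) : Cell) ∈ P) :
    ((0,1) : Cell) ∈ XS P :=
  mem_X_of_adj (c_mem_X h0) hu (by simp [Prod.ext_iff]) adj_0u

lemma conn_Y (hP : IsPolyomino P) (h0 : ((0,0) : Cell) ∈ P) :
    ∀ z ∈ YS P, z ∈ cmpt (YS P) ((-1,0) : Cell) := by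
  intro z hz
  set K : Finset Cell := cmpt (YS P) z with hK
  by_cases hmem : ((-1,0) : Cell) ∈ K
  · have h1 := (mem_cmpt.1 hmem).2
    exact mem_cmpt.2 ⟨hz, conn_symm h1⟩
  · exfalso
    have hKP : K ⊆ P := fun x hx => Y_subset (cmpt_subset _ _ hx)
    have hcl : ∀ x ∈ K, ∀ y ∈ P, Adj x y → y ∈ K := by
      intro x hx y hy hxy
      have hxY : x ∈ YS P := cmpt_subset _ _ hx
      have hxe : x ≠ ((-1,0) : Cell) := fun h => hmem (h ▸ hx)
      by_cases hyX : y ∈ XS P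
      · have : x ∈ XS P := mem_X_of_adj hyX (hKP hx) hxe (adj_symm hxy)
        exact absurd this (Finset.mem_sdiff.1 hxY).2
      · exact cmpt_closed hx (Finset.mem_sdiff.2 ⟨hy, hyX⟩) hxy
    have hall := closed_subset_eq hP hKP hcl (mem_cmpt_self hz) (0,0) h0
    exact (Finset.mem_sdiff.1 (cmpt_subset _ _ hall)).2 (c_mem_X h0)

lemma isPolyomino_Y (hP : IsPolyomino P) (h0 : ((0,0) : Cell) ∈ P)
    (he : ((-1,0) : Cell) ∈ P) : IsPolyomino (YS P) := by
  refine ⟨⟨_, e_mem_Y he⟩, ?_⟩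
  intro x hx y hy
  have hx' := conn_cmpt (e_mem_Y he) (mem_cmpt.1 (conn_Y hP h0 x hx)).2
  have hy' := conn_cmpt (e_mem_Y he) (mem_cmpt.1 (conn_Y hP h0 y hy)).2
  have h1 : conn (YS P) ((-1,0) : Cell) x := conn_mono (cmpt_subset _ _) hx'.2
  have h2 : conn (YS P) ((-1,0) : Cell) y := conn_mono (cmpt_subset _ _) hy'.2
  exact Relation.ReflTransGen.trans (conn_symm h1) h2

lemma XY_union (h0 : ((0,0) : Cell) ∈ P) : XS P ∪ YS P = P := by
  apply Finset.Subset.antisymm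
  · exact Finset.union_subset X_subset Y_subset
  · intro x hx
    by_cases h : x ∈ XS P
    · exact Finset.mem_union_left _ h
    · exact Finset.mem_union_right _ (Finset.mem_sdiff.2 ⟨hx, h⟩)

lemma XY_card {n : ℕ} (h0 : ((0,0) : Cell) ∈ P) (hc : P.card = n) :
    (XS P).card + (YS P).card = n := by
  have h1 : (XS P ∪ YS P).card = (XS P).card + (YS P).card :=
    Finset.card_union_of_disjoint Finset.sdiff_disjoint.symm
  rw [XY_union h0] at h1
  omega

/-- Case 1 of the F-step: `e ∉ P`. -/
noncomputable def f1 {n : ℕ} (x : CF n) (he : ((-1,0) : Cell) ∉ x.1) : CG n :=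
  ⟨x.1, x.2.1, x.2.2.1, x.2.2.2.1, x.2.2.2.2, he⟩

/-- Case 2 of the F-step: `e ∈ P`: split into `X` (marked at the origin) and the
rotated `Y` (marked `e ↦ 0`). -/
noncomputable def f2 {n : ℕ} (x : CF n) (hn : 2 ≤ n) (he : ((-1,0) : Cell) ∈ x.1) :
    Σ l : {l : ℕ // l ∈ Finset.Ioo 0 n}, CG l.1 × CG (n-l.1) := by
  set P := x.1 with hPdef
  have hP : IsPolyomino P := x.2.1
  have hcard : P.card = n := x.2.2.1
  have h0 : ((0,0) : Cell) ∈ P := x.2.2.2.1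
  have hA : TypeA P (0,0) := x.2.2.2.2
  have hA3 := typeA_zero_iff.1 hA
  have hXpos : 0 < (XS P).card := Finset.card_pos.2 ⟨_, c_mem_X h0⟩
  have hYpos : 0 < (YS P).card := Finset.card_pos.2 ⟨_, e_mem_Y he⟩
  have hcards := XY_card h0 hcard
  have hl : (XS P).card ∈ Finset.Ioo 0 n := by
    rw [Finset.mem_Ioo]
    omega
  refine ⟨⟨(XS P).card, hl⟩, ⟨⟨XS P, isPolyomino_cmpt ?_, rfl, c_mem_X h0, ?_⟩,
    ⟨(YS P).map φ4.toEmbedding, ?_, ?_, ?_, ?_⟩⟩⟩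
  · exact Finset.mem_erase.2 ⟨by simp [Prod.ext_iff], h0⟩
  · rw [typeB_zero_iff]
    exact ⟨⟨fun h => hA3.1 (X_subset h), fun h => hA3.2.1 (X_subset h),
      fun h => hA3.2.2 (X_subset h)⟩, e_not_mem_X⟩
  · exact isPolyomino_map (isPolyomino_Y hP h0 he) _ (fun _ _ h => adj_φ4 h)
  · rw [Finset.card_map]
    show (YS P).card = n - (XS P).card
    omega
  · have h' := Finset.mem_map_of_mem (φ4.toEmbedding) (e_mem_Y he)
    simpa [φ4] using h'
  · rw [typeB_zero_iff]
    refine ⟨⟨?_, ?_, ?_⟩, ?_⟩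
    · rw [Finset.mem_map_equiv]
      have e : φ4.symm ((-1,-1) : Cell) = ((0,-1) : Cell) := by simp [φ4]
      rw [e]
      intro hmem
      exact hA3.2.1 (Y_subset hmem)
    · rw [Finset.mem_map_equiv]
      have e : φ4.symm ((0,-1) : Cell) = ((0,0) : Cell) := by simp [φ4]
      rw [e]
      exact c_not_mem_Y h0
    · rw [Finset.mem_map_equiv]
      have e : φ4.symm ((1,-1) : Cell) = ((0,1) : Cell) := by simp [φ4]
      rw [e]
      intro hmem
      have huP : ((0,1) : Cell) ∈ P := Y_subset hmem
      exact (Finset.mem_sdiff.1 hmem).2 (u_mem_X h0 huP)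
    · rw [Finset.mem_map_equiv]
      have e : φ4.symm ((-1,0) : Cell) = ((-1,-1) : Cell) := by simp [φ4]
      rw [e]
      intro hmem
      exact hA3.1 (Y_subset hmem)

lemma f2_val1 {n : ℕ} (x : CF n) (hn : 2 ≤ n) (he : ((-1,0) : Cell) ∈ x.1) :
    ((f2 x hn he).2.1).1 = XS x.1 := rfl

lemma f2_val2 {n : ℕ} (x : CF n) (hn : 2 ≤ n) (he : ((-1,0) : Cell) ∈ x.1) :
    ((f2 x hn he).2.2).1 = (YS x.1).map φ4.toEmbedding := rfl

lemma f2_spec {n : ℕ} (x : CF n) (hn : 2 ≤ n) (he : ((-1,0) : Cell) ∈ x.1) :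
    x.1 = ((f2 x hn he).2.1).1 ∪ (((f2 x hn he).2.2).1).map φ4.symm.toEmbedding := by
  rw [f2_val1, f2_val2, map_cancel, XY_union x.2.2.2.1]

/-- the codomain of the F-step decomposition -/
abbrev bucketF (n : ℕ) : Type :=
  CG n ⊕ Σ l : {l : ℕ // l ∈ Finset.Ioo 0 n}, CG l.1 × CG (n-l.1)

noncomputable def decompF {n : ℕ} (hn : 2 ≤ n) (x : CF n) : bucketF n :=
  if he : ((-1,0) : Cell) ∈ x.1 then Sum.inr (f2 x hn he)
  else Sum.inl (f1 x he)

lemma decompF_inj {n : ℕ} (hn : 2 ≤ n) : Function.Injective (decompF hn) := by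
  intro x y h
  unfold decompF at h
  by_cases hex : ((-1,0) : Cell) ∈ x.1 <;> by_cases hey : ((-1,0) : Cell) ∈ y.1
  · rw [dif_pos hex, dif_pos hey] at h
    injection h with h
    have h1 : ((f2 x hn hex).2.1).1 = ((f2 y hn hey).2.1).1 :=
      congrArg (fun s => s.2.1.1) h
    have h2 : ((f2 x hn hex).2.2).1 = ((f2 y hn hey).2.2).1 :=
      congrArg (fun s => s.2.2.1) h
    apply Subtype.ext
    rw [f2_spec x hn hex, f2_spec y hn hey, h1, h2]
  · rw [dif_pos hex, dif_neg hey] at h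
    cases h
  · rw [dif_neg hex, dif_pos hey] at h
    cases h
  · rw [dif_neg hex, dif_neg hey] at h
    injection h with h
    have h1 := congrArg Subtype.val h
    exact Subtype.ext h1

end FStep

section Counting

lemma nat_card_sigma (s : Finset ℕ) (f : ℕ → Type) [hf : ∀ i, Finite (f i)] :
    Nat.card (Σ l : {l : ℕ // l ∈ s}, f l.1) = ∑ l ∈ s, Nat.card (f l) := by
  classical
  letI : ∀ i : {l : ℕ // l ∈ s}, Fintype (f i.1) := fun i => Fintype.ofFinite _
  rw [Nat.card_eq_fintype_card, Fintype.card_sigma]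
  rw [← Finset.sum_coe_sort s (fun l => Nat.card (f l))]
  congr 1
  ext i
  rw [Nat.card_eq_fintype_card]

instance (n : ℕ) : Finite (bucketG n) := by
  unfold bucketG
  infer_instance

instance (n : ℕ) : Finite (bucketF n) := by
  unfold bucketF
  infer_instance

lemma cardG_le {n : ℕ} (hn : 2 ≤ n) :
    Nat.card (CG n) ≤ Nat.card (CF (n-1)) + (Nat.card (CG (n-1))
      + ∑ l ∈ Finset.Ioo 0 (n-1), Nat.card (CG l) * Nat.card (CG (n-1-l))) := by
  have h1 : Nat.card (CG n) ≤ Nat.card (bucketG n) :=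
    Nat.card_le_card_of_injective _ (decompG_inj hn)
  have h2 : Nat.card (bucketG n) = Nat.card (CF (n-1)) + (Nat.card (CG (n-1))
      + ∑ l ∈ Finset.Ioo 0 (n-1), Nat.card (CG l) * Nat.card (CG (n-1-l))) := by
    show Nat.card (CF (n-1) ⊕ (CG (n-1) ⊕
      Σ l : {l : ℕ // l ∈ Finset.Ioo 0 (n-1)}, CG l.1 × CG (n-1-l.1))) = _
    rw [Nat.card_sum, Nat.card_sum,
      nat_card_sigma (Finset.Ioo 0 (n-1)) (fun l => CG l × CG (n-1-l))]
    congr 1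
    congr 1
    apply Finset.sum_congr rfl
    intro l _
    rw [Nat.card_prod]
  omega

lemma cardF_le {n : ℕ} (hn : 2 ≤ n) :
    Nat.card (CF n) ≤ Nat.card (CG n)
      + ∑ l ∈ Finset.Ioo 0 n, Nat.card (CG l) * Nat.card (CG (n-l)) := by
  have h1 : Nat.card (CF n) ≤ Nat.card (bucketF n) :=
    Nat.card_le_card_of_injective _ (decompF_inj hn)
  have h2 : Nat.card (bucketF n) = Nat.card (CG n)
      + ∑ l ∈ Finset.Ioo 0 n, Nat.card (CG l) * Nat.card (CG (n-l)) := by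
    show Nat.card (CG n ⊕
      Σ l : {l : ℕ // l ∈ Finset.Ioo 0 n}, CG l.1 × CG (n-l.1)) = _
    rw [Nat.card_sum, nat_card_sigma (Finset.Ioo 0 n) (fun l => CG l × CG (n-l))]
    congr 1
    apply Finset.sum_congr rfl
    intro l _
    rw [Nat.card_prod]
  omega

lemma CG_zero_empty : IsEmpty (CG 0) := by
  constructor
  rintro ⟨P, hP, hcard, h0, _⟩
  rw [Finset.card_eq_zero] at hcard
  subst hcard
  exact absurd h0 (Finset.notMem_empty _)

lemma CF_zero_empty : IsEmpty (CF 0) := by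
  constructor
  rintro ⟨P, hP, hcard, h0, _⟩
  rw [Finset.card_eq_zero] at hcard
  subst hcard
  exact absurd h0 (Finset.notMem_empty _)

lemma card_one_eq {P : Finset Cell} (hcard : P.card = 1) (h0 : ((0,0) : Cell) ∈ P) :
    P = {((0,0) : Cell)} := by
  rcases Finset.card_eq_one.1 hcard with ⟨a, rfl⟩
  rcases Finset.mem_singleton.1 h0 with rfl
  rfl

lemma CG_one_subsingleton : Subsingleton (CG 1) := by
  constructor
  rintro ⟨P, _, hPc, hP0, _⟩ ⟨Q, _, hQc, hQ0, _⟩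
  apply Subtype.ext
  show P = Q
  rw [card_one_eq hPc hP0, card_one_eq hQc hQ0]

lemma CF_one_subsingleton : Subsingleton (CF 1) := by
  constructor
  rintro ⟨P, _, hPc, hP0, _⟩ ⟨Q, _, hQc, hQ0, _⟩
  apply Subtype.ext
  show P = Q
  rw [card_one_eq hPc hP0, card_one_eq hQc hQ0]

lemma card_le_one_of_subsingleton (α : Type) [Subsingleton α] : Nat.card α ≤ 1 := by
  rcases isEmpty_or_nonempty α with h | h
  · simp [Nat.card_of_isEmpty]
  · haveI : Unique α := uniqueOfSubsingleton (Classical.choice h)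
    simp [Nat.card_unique]

theorem main_bound (F G : ℕ → ℕ)
    (hF1 : F 1 = 1) (hG1 : G 1 = 1)
    (hFrec : ∀ n, 2 ≤ n → F n = G n + ∑ ℓ ∈ Finset.Ioo 0 n, G ℓ * G (n - ℓ))
    (hGrec : ∀ n, 2 ≤ n →
      G n = F (n - 1) + G (n - 1) + ∑ ℓ ∈ Finset.Ioo 0 (n - 1), G ℓ * G (n - 1 - ℓ)) :
    ∀ n : ℕ, 1 ≤ n → Nat.card (CF n) ≤ F n ∧ Nat.card (CG n) ≤ G n := by
  intro n
  induction n using Nat.strong_induction_on with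
  | _ n ih =>
    intro hn1
    rcases Nat.lt_or_ge n 2 with hn2 | hn2
    · -- n = 1
      have hn : n = 1 := by omega
      subst hn
      constructor
      · haveI := CF_one_subsingleton
        calc Nat.card (CF 1) ≤ 1 := card_le_one_of_subsingleton _
        _ = F 1 := hF1.symm
      · haveI := CG_one_subsingleton
        calc Nat.card (CG 1) ≤ 1 := card_le_one_of_subsingleton _
        _ = G 1 := hG1.symm
    · -- n ≥ 2
      have ihF : Nat.card (CF (n-1)) ≤ F (n-1) := (ih (n-1) (by omega) (by omega)).1
      have ihG : ∀ m, 1 ≤ m → m < n → Nat.card (CG m) ≤ G m := fun m h1 h2 =>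
        (ih m h2 h1).2
      -- the G-bound at n
      have hGn : Nat.card (CG n) ≤ G n := by
        calc Nat.card (CG n)
            ≤ Nat.card (CF (n-1)) + (Nat.card (CG (n-1))
              + ∑ l ∈ Finset.Ioo 0 (n-1), Nat.card (CG l) * Nat.card (CG (n-1-l))) :=
              cardG_le hn2
          _ ≤ F (n-1) + (G (n-1)
              + ∑ l ∈ Finset.Ioo 0 (n-1), G l * G (n-1-l)) := by
              refine Nat.add_le_add ihF (Nat.add_le_add (ihG (n-1) (by omega) (by omega)) ?_)
              apply Finset.sum_le_sum
              intro l hl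
              rcases Finset.mem_Ioo.1 hl with ⟨hl1, hl2⟩
              exact Nat.mul_le_mul (ihG l hl1 (by omega))
                (ihG (n-1-l) (by omega) (by omega))
          _ = G n := by rw [hGrec n hn2]; ring
      refine ⟨?_, hGn⟩
      calc Nat.card (CF n)
          ≤ Nat.card (CG n)
            + ∑ l ∈ Finset.Ioo 0 n, Nat.card (CG l) * Nat.card (CG (n-l)) :=
            cardF_le hn2
        _ ≤ G n + ∑ l ∈ Finset.Ioo 0 n, G l * G (n-l) := by
            refine Nat.add_le_add hGn ?_
            apply Finset.sum_le_sum
            intro l hl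
            rcases Finset.mem_Ioo.1 hl with ⟨hl1, hl2⟩
            exact Nat.mul_le_mul (ihG l hl1 (by omega))
              (ihG (n-l) (by omega) (by omega))
        _ = F n := (hFrec n hn2).symm

end Counting

end PolyAux


theorem stmt_1 (F G : ℕ → ℕ)
    (hF0 : F 0 = 1) (hF1 : F 1 = 1) (hG0 : G 0 = 1) (hG1 : G 1 = 1)
    (hFrec : ∀ n, 2 ≤ n → F n = G n + ∑ ℓ ∈ Finset.Ioo 0 n, G ℓ * G (n - ℓ))
    (hGrec : ∀ n, 2 ≤ n →
      G n = F (n - 1) + G (n - 1) + ∑ ℓ ∈ Finset.Ioo 0 (n - 1), G ℓ * G (n - 1 - ℓ)) :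
    ∀ n : ℕ, 1 ≤ n → polyg n ≤ G n := by
  intro n hn
  exact le_trans (PolyAux.polyg_le_cardCG n)
    (PolyAux.main_bound F G hF1 hG1 hFrec hGrec n hn).2
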